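/- The function h₁(x) = Λ · E[|W|·φ(x|W|)/(C(Λ)+W²)], where W ~ N(0,1), φ(x) = ∫₀ˣ e^{-t²/2} dt, and C(Λ) satisfies 1/Λ = E[W²/(C(Λ)+W²)], satisfies x/(1+x²)^{3/2} ≤ h₁(x) ≤ max(x, 5) for all x > 0. -/

import Mathlib

open MeasureTheory ProbabilityTheory
open scoped NNReal ENNReal

/-- `φ(x) = ∫₀ˣ e^{-t²/2} dt`. -/
noncomputable def phi (x : ℝ) : ℝ := ∫ t in (0 : ℝ)..x, Real.exp (-t ^ 2 / 2)

/-- `h₁(x) = Λ · E[|W| φ(x|W|)/(c + W²)]`, `W ~ N(0,1)`. -/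
noncomputable def h₁ (Λ c x : ℝ) : ℝ :=
  Λ * ∫ w, |w| * phi (x * |w|) / (c + w ^ 2) ∂(gaussianReal 0 1)

lemma exp_cont : Continuous fun t : ℝ => Real.exp (-t ^ 2 / 2) :=
  Real.continuous_exp.comp ((continuous_pow 2).neg.div_const 2)

lemma phi_continuous : Continuous phi :=
  intervalIntegral.continuous_primitive (fun a b => exp_cont.intervalIntegrable a b) 0

lemma phi_le {y : ℝ} (hy : 0 ≤ y) : phi y ≤ y := by
  have h : phi y ≤ ∫ _t in (0:ℝ)..y, (1:ℝ) := by
    apply intervalIntegral.integral_mono_on hy (exp_cont.intervalIntegrable 0 y)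
      intervalIntegrable_const
    intro t _
    rw [Real.exp_le_one_iff]
    nlinarith [sq_nonneg t]
  simpa using h

lemma phi_ge {y : ℝ} (hy : 0 ≤ y) : y * Real.exp (-y ^ 2 / 2) ≤ phi y := by
  have h : (∫ _t in (0:ℝ)..y, Real.exp (-y ^ 2 / 2)) ≤ phi y := by
    apply intervalIntegral.integral_mono_on hy intervalIntegrable_const
      (exp_cont.intervalIntegrable 0 y)
    intro t ht
    apply Real.exp_le_exp.2
    rw [Set.mem_Icc] at ht
    nlinarith [ht.1, ht.2]
  simpa [mul_comm] using h

lemma phi_nonneg {y : ℝ} (hy : 0 ≤ y) : 0 ≤ phi y := by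
  have := phi_ge hy
  nlinarith [Real.exp_pos (-y ^ 2 / 2)]

/-- Express a gaussian integral as a Lebesgue integral against the density. -/
lemma gaussian_integral_eq (g : ℝ → ℝ) :
    ∫ w, g w ∂(gaussianReal 0 1) = ∫ w, gaussianPDFReal 0 1 w * g w := by
  rw [gaussianReal_of_var_ne_zero 0 one_ne_zero]
  have hd : (gaussianPDF 0 1)
      = fun x => ((Real.toNNReal (gaussianPDFReal 0 1 x) : ℝ≥0) : ℝ≥0∞) := by
    funext x; simp [gaussianPDF, ENNReal.ofReal]
  rw [hd, integral_withDensity_eq_integral_smul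
    ((measurable_gaussianPDFReal 0 1).real_toNNReal) g]
  congr 1; funext w
  rw [NNReal.smul_def, Real.coe_toNNReal _ (gaussianPDFReal_nonneg 0 1 w), smul_eq_mul]

/-- If `c = C(Λ)` solves `1/Λ = E[W²/(c+W²)]`, then for `x > 0`,
`x/(1+x²)^{3/2} ≤ h₁(x) ≤ max(x, 5)`. -/
theorem statement3 (Λ c : ℝ) (hΛ : 1 ≤ Λ) (hc : 0 < c)
    (hfix : 1 / Λ = ∫ w, w ^ 2 / (c + w ^ 2) ∂(gaussianReal 0 1))
    (x : ℝ) (hx : 0 < x) :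
    x / (1 + x ^ 2) ^ ((3 : ℝ) / 2) ≤ h₁ Λ c x ∧ h₁ Λ c x ≤ max x 5 := by
  have hΛ0 : (0:ℝ) < Λ := lt_of_lt_of_le one_pos hΛ
  have hcw : ∀ w : ℝ, 0 < c + w ^ 2 := fun w => by positivity
  set f : ℝ → ℝ := fun w => |w| * phi (x * |w|) / (c + w ^ 2) with hf
  set g : ℝ → ℝ := fun w => w ^ 2 / (c + w ^ 2) with hg
  have hg_le : ∀ w, g w ≤ 1 := fun w => by
    rw [hg, div_le_one (hcw w)]; linarith [hc]
  have hg_nonneg : ∀ w, 0 ≤ g w := fun w => by positivity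
  have hg_cont : Continuous g :=
    (continuous_pow 2).div (continuous_const.add (continuous_pow 2))
      (fun w => (hcw w).ne')
  have hg_int : Integrable g (gaussianReal 0 1) := by
    apply Integrable.mono' (integrable_const (1:ℝ)) hg_cont.aestronglyMeasurable
    filter_upwards with w
    rw [Real.norm_eq_abs, abs_of_nonneg (hg_nonneg w)]
    exact hg_le w
  have hf_nonneg : ∀ w, 0 ≤ f w := fun w => by
    apply div_nonneg _ (hcw w).le
    exact mul_nonneg (abs_nonneg w) (phi_nonneg (by positivity))
  have hf_le : ∀ w, f w ≤ x * g w := by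
    intro w
    have h1 : phi (x * |w|) ≤ x * |w| := phi_le (by positivity)
    have h2 : |w| * phi (x * |w|) ≤ x * w ^ 2 := by
      calc |w| * phi (x * |w|) ≤ |w| * (x * |w|) :=
            mul_le_mul_of_nonneg_left h1 (abs_nonneg w)
        _ = x * w ^ 2 := by rw [← sq_abs]; ring
    calc f w = |w| * phi (x * |w|) / (c + w ^ 2) := rfl
      _ ≤ x * w ^ 2 / (c + w ^ 2) := by gcongr
      _ = x * g w := by simp only [hg]; ring
  have hf_cont : Continuous f :=
    (continuous_abs.mul (phi_continuous.comp (continuous_const.mul continuous_abs))).div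
      (continuous_const.add (continuous_pow 2)) (fun w => (hcw w).ne')
  have hf_int : Integrable f (gaussianReal 0 1) := by
    apply Integrable.mono' (integrable_const x) hf_cont.aestronglyMeasurable
    filter_upwards with w
    rw [Real.norm_eq_abs, abs_of_nonneg (hf_nonneg w)]
    calc f w ≤ x * g w := hf_le w
      _ ≤ x * 1 := mul_le_mul_of_nonneg_left (hg_le w) hx.le
      _ = x := mul_one x
  constructor
  · -- lower bound
    set s : ℝ := Real.sqrt (1 + x ^ 2) with hs
    have hs0 : (0:ℝ) < s := Real.sqrt_pos.2 (by positivity)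
    have hs2 : s ^ 2 = 1 + x ^ 2 := Real.sq_sqrt (by positivity)
    have hs1 : (1:ℝ) ≤ s := by nlinarith
    have hcsw : ∀ w : ℝ, 0 < c + s ^ 2 * w ^ 2 := fun w => by positivity
    set q : ℝ → ℝ := fun w => w ^ 2 * Real.exp (-(x ^ 2 * w ^ 2) / 2) / (c + s ^ 2 * w ^ 2)
      with hq
    set ℓ : ℝ → ℝ := fun w => x * q w with hℓ
    have hq_cont : Continuous q := by
      apply Continuous.div
      · exact (continuous_pow 2).mul
          (Real.continuous_exp.comp ((continuous_const.mul (continuous_pow 2)).neg.div_const 2))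
      · exact continuous_const.add (continuous_const.mul (continuous_pow 2))
      · exact fun w => (hcsw w).ne'
    have hq_le : ∀ w, q w ≤ 1 := by
      intro w
      rw [hq, div_le_one (hcsw w)]
      have he : Real.exp (-(x ^ 2 * w ^ 2) / 2) ≤ 1 := by
        rw [Real.exp_le_one_iff]; nlinarith [sq_nonneg (x * w)]
      nlinarith [sq_nonneg w, Real.exp_pos (-(x ^ 2 * w ^ 2) / 2)]
    have hq_nonneg : ∀ w, 0 ≤ q w := fun w => by
      rw [hq]; positivity
    have hℓ_le : ∀ w, ℓ w ≤ f w := by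
      intro w
      have h1 : (x * |w|) * Real.exp (-(x * |w|) ^ 2 / 2) ≤ phi (x * |w|) :=
        phi_ge (by positivity)
      have he : (-(x * |w|) ^ 2 / 2) = -(x ^ 2 * w ^ 2) / 2 := by
        rw [mul_pow, sq_abs]
      rw [he] at h1
      have h2 : x * (w ^ 2 * Real.exp (-(x ^ 2 * w ^ 2) / 2)) ≤ |w| * phi (x * |w|) := by
        calc x * (w ^ 2 * Real.exp (-(x ^ 2 * w ^ 2) / 2))
            = |w| * ((x * |w|) * Real.exp (-(x ^ 2 * w ^ 2) / 2)) := by rw [← sq_abs]; ring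
          _ ≤ |w| * phi (x * |w|) := mul_le_mul_of_nonneg_left h1 (abs_nonneg w)
      have h3 : c + w ^ 2 ≤ c + s ^ 2 * w ^ 2 := by nlinarith [sq_nonneg w]
      have h4 : 0 ≤ x * (w ^ 2 * Real.exp (-(x ^ 2 * w ^ 2) / 2)) := by positivity
      calc ℓ w = x * (w ^ 2 * Real.exp (-(x ^ 2 * w ^ 2) / 2)) / (c + s ^ 2 * w ^ 2) := by
            simp only [hℓ, hq]; ring
        _ ≤ x * (w ^ 2 * Real.exp (-(x ^ 2 * w ^ 2) / 2)) / (c + w ^ 2) := by gcongr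
        _ ≤ |w| * phi (x * |w|) / (c + w ^ 2) := by gcongr
        _ = f w := rfl
    have hℓ_int : Integrable ℓ (gaussianReal 0 1) := by
      apply Integrable.mono' (integrable_const x)
        ((continuous_const.mul hq_cont).aestronglyMeasurable)
      filter_upwards with w
      change ‖x * q w‖ ≤ x
      rw [Real.norm_eq_abs, abs_of_nonneg (mul_nonneg hx.le (hq_nonneg w))]
      calc x * q w ≤ x * 1 := mul_le_mul_of_nonneg_left (hq_le w) hx.le
        _ = x := mul_one x
    -- change of variables
    have hpdf : ∀ w : ℝ, gaussianPDFReal 0 1 (s * w)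
        = gaussianPDFReal 0 1 w * Real.exp (-(x ^ 2 * w ^ 2) / 2) := by
      intro w
      simp only [gaussianPDFReal, NNReal.coe_one, mul_one, sub_zero]
      rw [mul_comm (_ * Real.exp _), ← mul_assoc, mul_comm (Real.exp _), mul_assoc]
      congr 1
      rw [← Real.exp_add]
      congr 1
      have : (s * w) ^ 2 = (1 + x ^ 2) * w ^ 2 := by rw [mul_pow, hs2]
      rw [this]; ring
    have hG : ∀ w : ℝ, gaussianPDFReal 0 1 (s * w) * g (s * w)
        = s ^ 2 * (gaussianPDFReal 0 1 w * q w) := by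
      intro w
      rw [hpdf w]
      simp only [hg, hq]
      rw [mul_pow]
      field_simp
    have key : (∫ w, q w ∂(gaussianReal 0 1)) = s⁻¹ * (s ^ 2)⁻¹ * ∫ w, g w ∂(gaussianReal 0 1) := by
      rw [gaussian_integral_eq, gaussian_integral_eq]
      have h1 : (∫ w : ℝ, gaussianPDFReal 0 1 (s * w) * g (s * w))
          = |s⁻¹| • ∫ u : ℝ, gaussianPDFReal 0 1 u * g u :=
        Measure.integral_comp_mul_left (fun u => gaussianPDFReal 0 1 u * g u) s
      rw [show (fun w : ℝ => gaussianPDFReal 0 1 (s * w) * g (s * w))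
          = fun w => s ^ 2 * (gaussianPDFReal 0 1 w * q w) from funext hG] at h1
      rw [integral_const_mul, abs_of_pos (inv_pos.2 hs0), smul_eq_mul] at h1
      have hs2ne : (s:ℝ) ^ 2 ≠ 0 := by positivity
      field_simp at h1 ⊢
      linarith [h1]
    have hint : (∫ w, ℓ w ∂(gaussianReal 0 1)) = x * (s⁻¹ * (s ^ 2)⁻¹ * (1 / Λ)) := by
      have : (∫ w, ℓ w ∂(gaussianReal 0 1)) = x * ∫ w, q w ∂(gaussianReal 0 1) := by
        simp only [hℓ]; exact integral_const_mul x q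
      rw [this, key, ← hfix]
    have hmono : (∫ w, ℓ w ∂(gaussianReal 0 1)) ≤ ∫ w, f w ∂(gaussianReal 0 1) :=
      integral_mono hℓ_int hf_int hℓ_le
    have h32 : (1 + x ^ 2 : ℝ) ^ ((3 : ℝ) / 2) = s ^ 3 := by
      rw [hs, Real.sqrt_eq_rpow, ← Real.rpow_natCast ((1 + x ^ 2 : ℝ) ^ ((1:ℝ)/2)) 3,
        ← Real.rpow_mul (by positivity)]
      norm_num
    rw [h32]
    have : x / s ^ 3 = Λ * (x * (s⁻¹ * (s ^ 2)⁻¹ * (1 / Λ))) := by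
      field_simp
    rw [this, h₁]
    rw [← hint]
    exact mul_le_mul_of_nonneg_left hmono hΛ0.le
  · -- upper bound
    have hint : (∫ w, f w ∂(gaussianReal 0 1)) ≤ ∫ w, x * g w ∂(gaussianReal 0 1) :=
      integral_mono hf_int (hg_int.const_mul x) hf_le
    have hxg : (∫ w, x * g w ∂(gaussianReal 0 1)) = x * (1 / Λ) := by
      rw [integral_const_mul, ← hfix]
    have hub : h₁ Λ c x ≤ Λ * (x * (1 / Λ)) := by
      rw [h₁]
      calc Λ * (∫ w, f w ∂(gaussianReal 0 1)) ≤ Λ * ∫ w, x * g w ∂(gaussianReal 0 1) :=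
            mul_le_mul_of_nonneg_left hint hΛ0.le
        _ = Λ * (x * (1 / Λ)) := by rw [hxg]
    have hxx : Λ * (x * (1 / Λ)) = x := by field_simp
    rw [hxx] at hub
    exact le_trans hub (le_max_left x 5)
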